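/- Let G and H be finite abelian groups with a non-degenerate pairing f: G × H → ℂ*. Let S be a collection of non-identity subgroups of G all of the same cardinality, and let Δ be a partition of G with {1_G} ∈ Δ such that every block A ∈ Δ other than {1_G} contains C − {1_G} for some C ∈ S. Let Γ be a partition of H such that Δ is finer than l(Γ), and let Λ be a partition of G with {1_G} ∈ Λ such that Δ is finer than Λ. If for all C, M ∈ S, C having the same Λ-distribution as M implies C^‡ has the same Γ-distribution as M^‡, then Λ is finer than l(Γ). -/

import Mathlib

open scoped Classical

section aux
variable {G H : Type*} [CommGroup G] [CommGroup H] [Fintype G] [Fintype H]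

lemma cardsum (s : Set H) : (∑ b : H, if b ∈ s then (1:ℂ) else 0) = Nat.card s := by
  rw [Finset.sum_boole, Nat.card_eq_fintype_card, Fintype.card_subtype]

lemma charsum (f : G → H → ℂ) (hf1 : ∀ a c b, f (a * c) b = f a b * f c b)
    (C : Subgroup G) (b : H) :
    (∑ x : G, if x ∈ C then f x b else 0)
      = if (∀ a ∈ C, f a b = 1) then (Nat.card C : ℂ) else 0 := by
  split_ifs with h
  · calc (∑ x : G, if x ∈ C then f x b else 0)
        = ∑ x : G, (if x ∈ (C : Set G) then (1:ℂ) else 0) := by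
          refine Finset.sum_congr rfl fun x _ => ?_
          by_cases hx : x ∈ C
          · simp only [hx, if_pos, Set.mem_setOf_eq, SetLike.mem_coe, if_true, h x hx]
          · simp [hx]
    _ = Nat.card (C : Set G) := cardsum _
    _ = (Nat.card C : ℂ) := rfl
  · push_neg at h
    obtain ⟨a₀, ha₀, hne⟩ := h
    have key : (∑ x : G, if x ∈ C then f x b else 0)
        = f a₀ b * ∑ x : G, if x ∈ C then f x b else 0 := by
      rw [Finset.mul_sum,
        ← Equiv.sum_comp (Equiv.mulLeft a₀) (fun x => if x ∈ C then f x b else 0)]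
      refine Finset.sum_congr rfl fun x _ => ?_
      show (if a₀ * x ∈ C then f (a₀ * x) b else 0) = f a₀ b * (if x ∈ C then f x b else 0)
      by_cases hx : x ∈ C
      · rw [if_pos (C.mul_mem ha₀ hx), if_pos hx, hf1]
      · rw [if_neg, if_neg hx, mul_zero]
        intro hmem
        exact hx (by simpa using C.mul_mem (C.inv_mem ha₀) hmem)
    have h2 : (1 - f a₀ b) * (∑ x : G, if x ∈ C then f x b else 0) = 0 := by
      rw [sub_mul, one_mul, ← key, sub_self]
    rcases mul_eq_zero.mp h2 with h3 | h3
    · exact absurd (sub_eq_zero.mp h3).symm hne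
    · exact h3


lemma keylem (f : G → H → ℂ) (hf1 : ∀ a c b, f (a * c) b = f a b * f c b)
    (B : Set H) (C : Subgroup G) (a : G)
    (hsig : ∀ x ∈ (C : Set G) \ {1},
      (∑ b : H, if b ∈ B then f x b else 0) = ∑ b : H, if b ∈ B then f a b else 0) :
    (Nat.card C : ℂ) * Nat.card ({b : H | ∀ a ∈ C, f a b = 1} ∩ B : Set H)
      = (∑ b : H, if b ∈ B then f 1 b else 0)
        + ((Nat.card C : ℂ) - 1) * ∑ b : H, if b ∈ B then f a b else 0 := by
  have stepA : (∑ x : G, if x ∈ C then (∑ b : H, if b ∈ B then f x b else 0) else 0)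
      = (Nat.card C : ℂ) * Nat.card ({b : H | ∀ a ∈ C, f a b = 1} ∩ B : Set H) := by
    have h1 : ∀ x : G, (if x ∈ C then (∑ b : H, if b ∈ B then f x b else 0) else 0)
        = ∑ b : H, if b ∈ B then (if x ∈ C then f x b else 0) else 0 := by
      intro x; split_ifs with hx
      · rfl
      · simp
    rw [Finset.sum_congr rfl (fun x _ => h1 x), Finset.sum_comm]
    have h2 : ∀ b : H, (∑ x : G, if b ∈ B then (if x ∈ C then f x b else 0) else 0)
        = (Nat.card C : ℂ) * (if b ∈ ({b : H | ∀ a ∈ C, f a b = 1} ∩ B) then 1 else 0) := by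
      intro b
      by_cases hb : b ∈ B
      · simp only [if_pos hb]
        rw [charsum f hf1 C b]
        by_cases hd : ∀ a ∈ C, f a b = 1
        · rw [if_pos hd, if_pos ⟨hd, hb⟩, mul_one]
        · rw [if_neg hd, if_neg (by rintro ⟨h1', _⟩; exact hd h1'), mul_zero]
      · simp only [if_neg hb, if_neg (by rintro ⟨_, h⟩; exact hb h :
          b ∉ ({b : H | ∀ a ∈ C, f a b = 1} ∩ B)), Finset.sum_const_zero, mul_zero]
    rw [Finset.sum_congr rfl (fun b _ => h2 b), ← Finset.mul_sum]
    refine congrArg (fun z => (Nat.card C : ℂ) * z)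
      (Eq.trans ?_ (cardsum ({b : H | ∀ a ∈ C, f a b = 1} ∩ B)))
    exact Finset.sum_congr rfl (fun i _ => by congr 1)
  have h1C : (1:G) ∈ C := C.one_mem
  have stepB : (∑ x : G, if x ∈ C then (∑ b : H, if b ∈ B then f x b else 0) else 0)
      = (∑ b : H, if b ∈ B then f 1 b else 0)
        + ((Nat.card C : ℂ) - 1) * ∑ b : H, if b ∈ B then f a b else 0 := by
    set σ : G → ℂ := fun x => ∑ b : H, if b ∈ B then f x b else 0 with hσdef
    have herase : (∑ x ∈ Finset.univ.erase (1:G), if x ∈ C then σ x else 0)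
        = ((Nat.card C : ℂ) - 1) * σ a := by
      have h3 : ∀ x ∈ Finset.univ.erase (1:G),
          (if x ∈ C then σ x else 0) = (if x ∈ C then (1:ℂ) else 0) * σ a := by
        intro x hx
        rcases Finset.mem_erase.mp hx with ⟨hx1, _⟩
        by_cases hxC : x ∈ C
        · rw [if_pos hxC, if_pos hxC, one_mul]
          exact hsig x ⟨hxC, by simpa using hx1⟩
        · simp [hxC]
      rw [Finset.sum_congr rfl h3, ← Finset.sum_mul]
      congr 1
      have h4 : (∑ x ∈ Finset.univ.erase (1:G), if x ∈ C then (1:ℂ) else 0)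
          = (∑ x : G, if x ∈ C then (1:ℂ) else 0) - 1 := by
        rw [← Finset.sum_erase_add Finset.univ _ (Finset.mem_univ (1:G)), if_pos h1C]
        ring
      rw [h4]
      have hc : (∑ x : G, if x ∈ C then (1:ℂ) else 0) = (Nat.card C : ℂ) := by
        exact Eq.trans (Finset.sum_congr rfl (fun i _ => by congr 1)) (cardsum (C : Set G))
      rw [hc]
    calc (∑ x : G, if x ∈ C then σ x else 0)
        = (∑ x ∈ Finset.univ.erase (1:G), if x ∈ C then σ x else 0)
          + (if (1:G) ∈ C then σ 1 else 0) := by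
          rw [Finset.sum_erase_add Finset.univ _ (Finset.mem_univ (1:G))]
      _ = σ 1 + ((Nat.card C : ℂ) - 1) * σ a := by
          rw [herase, if_pos h1C, add_comm]
  exact stepA.symm.trans stepB

end aux


theorem stmt12 {G H : Type*} [CommGroup G] [CommGroup H] [Fintype G] [Fintype H]
    (f : G → H → ℂ)
    (hf1 : ∀ a c b, f (a * c) b = f a b * f c b)
    (hf2 : ∀ a b d, f a (b * d) = f a b * f a d)
    (hnd1 : ∀ a : G, (∀ b : H, f a b = 1) → a = 1)
    (hnd2 : ∀ b : H, (∀ a : G, f a b = 1) → b = 1)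
    -- S: a collection of non-identity subgroups of G of equal cardinality
    (S : Set (Subgroup G))
    (hSbot : ∀ C ∈ S, C ≠ ⊥)
    (hScard : ∀ C ∈ S, ∀ M ∈ S, Nat.card C = Nat.card M)
    -- Δ: a partition of G containing {1}, whose other blocks each contain C − {1} for some C ∈ S
    (Δ : Set (Set G))
    (hΔne : ∀ A ∈ Δ, A.Nonempty) (hΔcover : ∀ a : G, ∃ A ∈ Δ, a ∈ A)
    (hΔdisj : ∀ A ∈ Δ, ∀ A' ∈ Δ, A ≠ A' → A ∩ A' = ∅)
    (hΔ1 : ({1} : Set G) ∈ Δ)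
    (hΔS : ∀ A ∈ Δ, A ≠ ({1} : Set G) → ∃ C ∈ S, (C : Set G) \ {1} ⊆ A)
    -- Γ: a partition of H such that Δ is finer than l(Γ)
    (Γ : Set (Set H))
    (hΓne : ∀ B ∈ Γ, B.Nonempty) (hΓcover : ∀ b : H, ∃ B ∈ Γ, b ∈ B)
    (hΓdisj : ∀ B ∈ Γ, ∀ B' ∈ Γ, B ≠ B' → B ∩ B' = ∅)
    (hΔΓ : ∀ A ∈ Δ, ∀ a ∈ A, ∀ c ∈ A, ∀ B ∈ Γ,
        (∑ b : H, if b ∈ B then f a b else 0) = ∑ b : H, if b ∈ B then f c b else 0)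
    -- Λ: a partition of G containing {1} such that Δ is finer than Λ
    (Λ : Set (Set G))
    (hΛne : ∀ A ∈ Λ, A.Nonempty) (hΛcover : ∀ a : G, ∃ A ∈ Λ, a ∈ A)
    (hΛdisj : ∀ A ∈ Λ, ∀ A' ∈ Λ, A ≠ A' → A ∩ A' = ∅)
    (hΛ1 : ({1} : Set G) ∈ Λ)
    (hΔΛ : ∀ A ∈ Δ, ∃ W ∈ Λ, A ⊆ W)
    -- hypothesis: equal Λ-distributions of members of S give equal Γ-distributions of their duals
    (hMac : ∀ C ∈ S, ∀ M ∈ S,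
        (∀ A ∈ Λ, Nat.card ((C : Set G) ∩ A : Set G) = Nat.card ((M : Set G) ∩ A : Set G)) →
        (∀ B ∈ Γ,
          Nat.card ({b : H | ∀ a ∈ C, f a b = 1} ∩ B : Set H)
            = Nat.card ({b : H | ∀ a ∈ M, f a b = 1} ∩ B : Set H))) :
    -- conclusion: Λ is finer than l(Γ)
    ∀ W ∈ Λ, ∀ a ∈ W, ∀ c ∈ W, ∀ B ∈ Γ,
      (∑ b : H, if b ∈ B then f a b else 0) = ∑ b : H, if b ∈ B then f c b else 0 := by
  intro W hW a ha c hc B hB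
  by_cases ha1 : a = 1
  · have hWeq : W = ({1} : Set G) := by
      by_contra hne
      have hdisj := hΛdisj W hW {1} hΛ1 hne
      have h1 : (1:G) ∈ W ∩ {1} := ⟨ha1 ▸ ha, rfl⟩
      rw [hdisj] at h1
      exact Set.notMem_empty 1 h1
    have hc1 : c = 1 := by rw [hWeq] at hc; exact hc
    rw [ha1, hc1]
  by_cases hc1 : c = 1
  · have hWeq : W = ({1} : Set G) := by
      by_contra hne
      have hdisj := hΛdisj W hW {1} hΛ1 hne
      have h1 : (1:G) ∈ W ∩ {1} := ⟨hc1 ▸ hc, rfl⟩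
      rw [hdisj] at h1
      exact Set.notMem_empty 1 h1
    exact absurd (by rw [hWeq] at ha; exact ha) ha1
  -- now a ≠ 1, c ≠ 1
  have hW1 : (1:G) ∉ W := by
    intro h1W
    have hne : W ≠ ({1} : Set G) := fun h => ha1 (by rw [h] at ha; exact ha)
    have hdisj := hΛdisj W hW {1} hΛ1 hne
    have h1 : (1:G) ∈ W ∩ {1} := ⟨h1W, rfl⟩
    rw [hdisj] at h1
    exact Set.notMem_empty 1 h1
  obtain ⟨Aa, hAa, haAa⟩ := hΔcover a
  have hAane : Aa ≠ ({1} : Set G) := fun h => ha1 (by rw [h] at haAa; exact haAa)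
  obtain ⟨C, hCS, hCsub⟩ := hΔS Aa hAa hAane
  obtain ⟨Wa, hWa, hAaWa⟩ := hΔΛ Aa hAa
  have hAaW : Aa ⊆ W := by
    have hWaW : Wa = W := by
      by_contra hne
      have hdisj := hΛdisj Wa hWa W hW hne
      have h1 : a ∈ Wa ∩ W := ⟨hAaWa haAa, ha⟩
      rw [hdisj] at h1
      exact Set.notMem_empty a h1
    rw [← hWaW]; exact hAaWa
  obtain ⟨Ac, hAc, hcAc⟩ := hΔcover c
  have hAcne : Ac ≠ ({1} : Set G) := fun h => hc1 (by rw [h] at hcAc; exact hcAc)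
  obtain ⟨M, hMS, hMsub⟩ := hΔS Ac hAc hAcne
  obtain ⟨Wc, hWc, hAcWc⟩ := hΔΛ Ac hAc
  have hAcW : Ac ⊆ W := by
    have hWcW : Wc = W := by
      by_contra hne
      have hdisj := hΛdisj Wc hWc W hW hne
      have h1 : c ∈ Wc ∩ W := ⟨hAcWc hcAc, hc⟩
      rw [hdisj] at h1
      exact Set.notMem_empty c h1
    rw [← hWcW]; exact hAcWc
  -- equal Λ-distributions
  have hinterW : ∀ (N : Subgroup G), ((N : Set G) \ {1}) ⊆ W →
      (N : Set G) ∩ W = (N : Set G) \ {1} := by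
    intro N hNW
    ext x
    constructor
    · rintro ⟨hxN, hxW⟩
      exact ⟨hxN, fun hx1 => hW1 (Set.mem_singleton_iff.mp hx1 ▸ hxW)⟩
    · rintro ⟨hxN, hx1⟩
      exact ⟨hxN, hNW ⟨hxN, hx1⟩⟩
  have hcarddiff : ∀ (N : Subgroup G),
      Nat.card ((N : Set G) \ {1} : Set G) = Nat.card N - 1 := by
    intro N
    rw [Nat.card_coe_set_eq, Set.ncard_diff_singleton_of_mem N.one_mem]
    rfl
  have hdist : ∀ V ∈ Λ, Nat.card ((C : Set G) ∩ V : Set G)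
      = Nat.card ((M : Set G) ∩ V : Set G) := by
    intro V hV
    by_cases hVW : V = W
    · rw [hVW, hinterW C (hCsub.trans hAaW), hinterW M (hMsub.trans hAcW),
        hcarddiff C, hcarddiff M, hScard C hCS M hMS]
    · by_cases hV1 : V = ({1} : Set G)
      · rw [hV1]
        have h1 : ∀ (N : Subgroup G), (N : Set G) ∩ {1} = {1} := by
          intro N; ext x
          simp only [Set.mem_inter_iff, Set.mem_singleton_iff, SetLike.mem_coe,
            and_iff_right_iff_imp]
          rintro rfl; exact N.one_mem
        rw [h1 C, h1 M]
      · have hVW' := hΛdisj V hV W hW hVW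
        have hV1' := hΛdisj V hV {1} hΛ1 hV1
        have hempty : ∀ (N : Subgroup G), ((N : Set G) \ {1}) ⊆ W →
            (N : Set G) ∩ V = ∅ := by
          intro N hNW
          ext x
          simp only [Set.mem_inter_iff, Set.mem_empty_iff_false, iff_false, not_and]
          intro hxN hxV
          by_cases hx1 : x = 1
          · have : x ∈ V ∩ ({1} : Set G) := ⟨hxV, by simp [hx1]⟩
            rw [hV1'] at this
            exact Set.notMem_empty x this
          · have : x ∈ V ∩ W := ⟨hxV, hNW ⟨hxN, hx1⟩⟩
            rw [hVW'] at this
            exact Set.notMem_empty x this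
        rw [hempty C (hCsub.trans hAaW), hempty M (hMsub.trans hAcW)]
  have hdual := hMac C hCS M hMS hdist B hB
  have hkC := keylem f hf1 B C a (fun x hx => hΔΓ Aa hAa x (hCsub hx) a haAa B hB)
  have hkM := keylem f hf1 B M c (fun x hx => hΔΓ Ac hAc x (hMsub hx) c hcAc B hB)
  have hn : Nat.card M = Nat.card C := hScard M hMS C hCS
  rw [hdual] at hkC
  rw [hn] at hkM
  have hkey : ((Nat.card C : ℂ) - 1) * (∑ b : H, if b ∈ B then f a b else 0)
      = ((Nat.card C : ℂ) - 1) * (∑ b : H, if b ∈ B then f c b else 0) := by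
    exact add_left_cancel (hkC.symm.trans hkM)
  have h2 : 1 < Nat.card C := by rw [Subgroup.one_lt_card_iff_ne_bot]; exact hSbot C hCS
  have hne0 : ((Nat.card C : ℂ) - 1) ≠ 0 := by
    rw [sub_ne_zero, Ne, Nat.cast_eq_one]
    omega
  exact mul_left_cancel₀ hne0 hkey
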